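/- Let k be a positive sixth-power-free integer and let p be a prime with p ≡ 3 (mod 4) and p ∣ k. Then there do not exist x, y, z ∈ ℚ_p, not all zero, with x^6 + y^6 = k·z^6. -/

import Mathlib

private lemma zmod_six_ne_neg_one {p : ℕ} [Fact p.Prime] (hp : p % 4 = 3) (a : ZMod p) :
    a ^ 6 ≠ -1 := by
  intro h
  have hsq : IsSquare (-1 : ZMod p) := ⟨a ^ 3, by rw [← h]; ring⟩
  rw [ZMod.exists_sq_eq_neg_one_iff] at hsq
  exact hsq hp

private lemma key_norm {p : ℕ} [Fact p.Prime] (hp : p % 4 = 3) {u : ℚ_[p]} (hu : ‖u‖ ≤ 1) :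
    ‖u ^ 6 + 1‖ = 1 := by
  rcases lt_or_eq_of_le hu with h | h
  · have h6 : ‖u ^ 6‖ < 1 := by
      rw [norm_pow]; exact pow_lt_one₀ (norm_nonneg u) h (by norm_num)
    have hne : ‖u ^ 6‖ ≠ ‖(1 : ℚ_[p])‖ := by rw [norm_one]; exact ne_of_lt h6
    rw [Padic.add_eq_max_of_ne hne, norm_one, max_eq_right h6.le]
  · set U : ℤ_[p] := ⟨u, hu⟩ with hU
    have hcast : ((U ^ 6 + 1 : ℤ_[p]) : ℚ_[p]) = u ^ 6 + 1 := by rw [PadicInt.coe_add, PadicInt.coe_pow, PadicInt.coe_one]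
    by_contra hne
    have hle : ‖u ^ 6 + 1‖ ≤ 1 := by
      calc ‖u ^ 6 + 1‖ ≤ max ‖u ^ 6‖ ‖(1 : ℚ_[p])‖ := Padic.nonarchimedean _ _
        _ ≤ 1 := by rw [norm_one, norm_pow, ← h]; simp [h]
    have hlt : ‖(U ^ 6 + 1 : ℤ_[p])‖ < 1 := by
      rw [PadicInt.norm_def, hcast]; exact lt_of_le_of_ne hle hne
    rw [PadicInt.norm_lt_one_iff_dvd] at hlt
    obtain ⟨c, hc⟩ := hlt
    have h0 : PadicInt.toZMod (U ^ 6 + 1) = 0 := by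
      rw [hc, map_mul, map_natCast, ZMod.natCast_self, zero_mul]
    rw [map_add, map_pow, map_one] at h0
    exact zmod_six_ne_neg_one hp (PadicInt.toZMod U) (by linear_combination h0)

private lemma norm_sum_pow6 {p : ℕ} [Fact p.Prime] (hp : p % 4 = 3) {x y : ℚ_[p]}
    (hx : x ≠ 0) (hxy : ‖y‖ ≤ ‖x‖) : ‖x ^ 6 + y ^ 6‖ = ‖x‖ ^ 6 := by
  have hrw : x ^ 6 + y ^ 6 = x ^ 6 * ((y / x) ^ 6 + 1) := by field_simp; ring
  have hu : ‖y / x‖ ≤ 1 := by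
    rw [norm_div]
    exact div_le_one_of_le₀ hxy (norm_nonneg x)
  rw [hrw, norm_mul, key_norm hp hu, norm_pow, mul_one]

/-- If `k` is a positive sixth-power-free integer and `p` is a prime with `p ≡ 3 (mod 4)`
and `p ∣ k`, then `x^6 + y^6 = k·z^6` has no nontrivial solution over `ℚ_p`. -/
theorem not_solvable_at_three_mod_four (k : ℕ) (hk : 0 < k)
    (hsf : ¬ ∃ m : ℕ, 1 < m ∧ m ^ 6 ∣ k) (p : ℕ) [Fact p.Prime]
    (hp : p % 4 = 3) (hpk : p ∣ k) :
    ¬ ∃ x y z : ℚ_[p], ¬(x = 0 ∧ y = 0 ∧ z = 0) ∧ x ^ 6 + y ^ 6 = (k : ℚ_[p]) * z ^ 6 := by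
  rintro ⟨x, y, z, hnt, heq⟩
  have hprime : p.Prime := Fact.out
  have hk0 : (k : ℚ_[p]) ≠ 0 := Nat.cast_ne_zero.mpr hk.ne'
  -- bounds on e := padicValNat p k
  set e := padicValNat p k with he
  have he1 : 1 ≤ e := one_le_padicValNat_of_dvd hk.ne' hpk
  have he5 : e ≤ 5 := by
    by_contra h
    exact hsf ⟨p, hprime.one_lt, (pow_dvd_pow p (by omega)).trans pow_padicValNat_dvd⟩
  by_cases hz : z = 0
  · -- case z = 0 : x^6 + y^6 = 0
    rw [hz] at heq
    have heq' : x ^ 6 + y ^ 6 = 0 := by rw [heq]; norm_num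
    by_cases hy : y = 0
    · have hx : x = 0 := by
        have : x ^ 6 = 0 := by rw [hy] at heq'; simpa using heq'
        exact pow_eq_zero_iff (by norm_num) |>.mp this
      exact hnt ⟨hx, hy, hz⟩
    · have hx6 : x ^ 6 = -(y ^ 6) := by linear_combination heq'
      have hnorm : ‖x‖ = ‖y‖ := by
        have h6 : ‖x‖ ^ 6 = ‖y‖ ^ 6 := by
          rw [← norm_pow, ← norm_pow, hx6, norm_neg]
        exact (pow_left_inj₀ (norm_nonneg x) (norm_nonneg y) (by norm_num)).mp h6
      have hx : x ≠ 0 := by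
        intro h
        rw [h, norm_zero] at hnorm
        exact hy (norm_eq_zero.mp hnorm.symm)
      have := norm_sum_pow6 hp hx (le_of_eq hnorm.symm)
      rw [heq', norm_zero] at this
      have : ‖x‖ ^ 6 = 0 := this.symm
      exact hx (norm_eq_zero.mp (pow_eq_zero_iff (by norm_num) |>.mp this))
  · -- case z ≠ 0
    have hrhs : (k : ℚ_[p]) * z ^ 6 ≠ 0 := mul_ne_zero hk0 (pow_ne_zero _ hz)
    have hlhs : x ^ 6 + y ^ 6 ≠ 0 := heq ▸ hrhs
    -- get w with ‖x^6+y^6‖ = ‖w‖^6, w ≠ 0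
    obtain ⟨w, hw, hwn⟩ : ∃ w : ℚ_[p], w ≠ 0 ∧ ‖x ^ 6 + y ^ 6‖ = ‖w‖ ^ 6 := by
      rcases le_total ‖y‖ ‖x‖ with h | h
      · have hx : x ≠ 0 := by
          intro hx0
          apply hlhs
          have hy0 : y = 0 := by
            rw [hx0, norm_zero] at h
            exact norm_eq_zero.mp (le_antisymm h (norm_nonneg y))
          simp [hx0, hy0]
        exact ⟨x, hx, norm_sum_pow6 hp hx h⟩
      · have hy : y ≠ 0 := by
          intro hy0
          apply hlhs
          have hx0 : x = 0 := by
            rw [hy0, norm_zero] at h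
            exact norm_eq_zero.mp (le_antisymm h (norm_nonneg x))
          simp [hx0, hy0]
        exact ⟨y, hy, by rw [add_comm]; exact norm_sum_pow6 hp hy h⟩
    -- norm equation
    have hkey : ‖(w / z) ^ 6‖ = ‖(k : ℚ_[p])‖ := by
      have h1 : ‖w‖ ^ 6 = ‖(k : ℚ_[p])‖ * ‖z‖ ^ 6 := by
        rw [← hwn, heq, norm_mul, norm_pow]
      rw [norm_pow, norm_div, div_pow, h1, mul_div_assoc, div_self (pow_ne_zero _ (norm_ne_zero_iff.mpr hz)), mul_one]
    -- pass to valuations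
    have ht : (w / z) ≠ 0 := div_ne_zero hw hz
    have ht6 : (w / z) ^ 6 ≠ 0 := pow_ne_zero _ ht
    have hval : ((w / z) ^ 6).valuation = (k : ℚ_[p]).valuation := by
      have h1 := Padic.norm_eq_zpow_neg_valuation ht6
      have h2 := Padic.norm_eq_zpow_neg_valuation hk0
      rw [h1, h2] at hkey
      have hp1 : (1 : ℝ) < (p : ℝ) := by exact_mod_cast hprime.one_lt
      have := zpow_right_injective₀ (by positivity) (ne_of_gt hp1) hkey
      omega
    have hvpow : ((w / z) ^ 6).valuation = 6 * (w / z).valuation := by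
      have : ((w / z) ^ 6) = (w/z) * ((w/z) * ((w/z) * ((w/z) * ((w/z) * (w/z))))) := by ring
      rw [this]
      rw [Padic.valuation_mul ht (mul_ne_zero ht (mul_ne_zero ht (mul_ne_zero ht (mul_ne_zero ht ht)))),
        Padic.valuation_mul ht (mul_ne_zero ht (mul_ne_zero ht (mul_ne_zero ht ht))),
        Padic.valuation_mul ht (mul_ne_zero ht (mul_ne_zero ht ht)),
        Padic.valuation_mul ht (mul_ne_zero ht ht),
        Padic.valuation_mul ht ht]
      ring
    rw [hvpow, Padic.valuation_natCast] at hval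
    omega
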